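/- Let n ≥ 2. Assume T : S^n_+ → S^n_+ is a surjective map that is 1-Lipschitz with respect to the geodesic distance, and assume T(C) = C, where C = S^n_+ ∩ {x_{n+1} = 0} is the equator. Then T(N) = N and there exists an n×n orthogonal matrix A such that T((z, x_{n+1})) = (Az, x_{n+1}) for every (z, x_{n+1}) ∈ S^n_+ with z ∈ R^n; in particular T is an isometry of S^n_+ fixing the north pole N. -/

import Mathlib

set_option maxHeartbeats 1000000


open MeasureTheory Real

noncomputable section

/-- Euclidean space `ℝ^{n+1}`. -/
abbrev Euc (n : ℕ) := EuclideanSpace ℝ (Fin (n + 1))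

/-- The unit sphere `S^n ⊆ ℝ^{n+1}`. -/
def unitSphere (n : ℕ) : Set (Euc n) := Metric.sphere 0 1

/-- The closed upper half-sphere `S^n_+`. -/
def upperHemi (n : ℕ) : Set (Euc n) := {x ∈ unitSphere n | 0 ≤ x (Fin.last n)}

/-- The equator `C = S^n_+ ∩ {x_{n+1} = 0}`. -/
def equator (n : ℕ) : Set (Euc n) := {x ∈ upperHemi n | x (Fin.last n) = 0}

/-- The geodesic distance on the sphere: `d(x,y) = arccos (x ⬝ y)`. -/
def geod {n : ℕ} (x y : Euc n) : ℝ := Real.arccos (inner ℝ x y)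

/-- The north pole `N = (0,…,0,1)`. -/
def northPole (n : ℕ) : Euc n := EuclideanSpace.single (Fin.last n) 1

/-- The uniform probability measure `σ_+` on the upper half-sphere, i.e. the normalized
restriction to `S^n_+` of the `n`-dimensional Hausdorff measure. -/
def sigmaPlus (n : ℕ) : Measure (Euc n) :=
  ((μH[n] : Measure (Euc n)) (upperHemi n))⁻¹ • (μH[n] : Measure (Euc n)).restrict (upperHemi n)

/-! ### Auxiliary lemmas -/

section Aux

local notation "⟪" x ", " y "⟫" => @inner ℝ _ _ x y

variable {E : Type*} [NormedAddCommGroup E] [InnerProductSpace ℝ E]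

lemma Stmt3Aux.arccos_antitone : Antitone Real.arccos := by
  intro s t hst
  simp only [Real.arccos_eq_pi_div_two_sub_arcsin]
  have := Real.monotone_arcsin hst
  linarith

lemma Stmt3Aux.inner_mem_Icc {x y : E} (hx : ‖x‖ = 1) (hy : ‖y‖ = 1) :
    ⟪x, y⟫ ∈ Set.Icc (-1:ℝ) 1 := by
  have h := abs_real_inner_le_norm x y
  rw [hx, hy, mul_one] at h
  exact abs_le.mp h

lemma Stmt3Aux.cos_arccos_inner {x y : E} (hx : ‖x‖ = 1) (hy : ‖y‖ = 1) :
    Real.cos (Real.arccos ⟪x, y⟫) = ⟪x, y⟫ := by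
  obtain ⟨h1, h2⟩ := Stmt3Aux.inner_mem_Icc hx hy
  exact Real.cos_arccos h1 h2

lemma Stmt3Aux.arccos_triangle {x y z : E} (hx : ‖x‖ = 1) (hy : ‖y‖ = 1) (hz : ‖z‖ = 1) :
    Real.arccos ⟪x, z⟫ ≤ Real.arccos ⟪x, y⟫ + Real.arccos ⟪y, z⟫ := by
  set a : ℝ := ⟪x, y⟫ with ha
  set b : ℝ := ⟪y, z⟫ with hb
  obtain ⟨ha1, ha2⟩ := Stmt3Aux.inner_mem_Icc hx hy
  obtain ⟨hb1, hb2⟩ := Stmt3Aux.inner_mem_Icc hy hz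
  by_cases hle : Real.arccos a + Real.arccos b ≤ π
  · set u : E := x - a • y with hu
    set v : E := z - b • y with hv
    have hyy : ⟪y, y⟫ = 1 := by rw [real_inner_self_eq_norm_sq, hy]; norm_num
    have hxx : ⟪x, x⟫ = 1 := by rw [real_inner_self_eq_norm_sq, hx]; norm_num
    have hzz : ⟪z, z⟫ = 1 := by rw [real_inner_self_eq_norm_sq, hz]; norm_num
    have huy : ⟪u, y⟫ = 0 := by
      simp only [hu, inner_sub_left, real_inner_smul_left, hyy, ← ha]; ring
    have hyv : ⟪y, v⟫ = 0 := by
      simp only [hv, inner_sub_right, real_inner_smul_right, hyy, ← hb]; ring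
    have hu2 : ⟪u, u⟫ = 1 - a^2 := by
      have h1 : ⟪u, u⟫ = ⟪u, x⟫ - a * ⟪u, y⟫ := by
        simp only [hu, inner_sub_right, real_inner_smul_right]
      rw [h1, huy]
      have h2 : ⟪u, x⟫ = 1 - a * a := by
        simp only [hu, inner_sub_left, real_inner_smul_left, hxx]
        have hcomm : ⟪y, x⟫ = a := (real_inner_comm y x).symm
        rw [hcomm]
      rw [h2]; ring
    have hv2 : ⟪v, v⟫ = 1 - b^2 := by
      have h1 : ⟪v, v⟫ = ⟪z, v⟫ - b * ⟪y, v⟫ := by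
        simp only [hv, inner_sub_left, real_inner_smul_left]
      have h2 : ⟪z, v⟫ = 1 - b * b := by
        simp only [hv, inner_sub_right, real_inner_smul_right, hzz]
        have hcomm : ⟪z, y⟫ = b := (real_inner_comm z y).symm
        rw [hcomm]
      rw [h1, h2, hyv]; ring
    have hnu : ‖u‖ = Real.sqrt (1 - a^2) := by
      rw [← hu2, real_inner_self_eq_norm_sq, Real.sqrt_sq (norm_nonneg u)]
    have hnv : ‖v‖ = Real.sqrt (1 - b^2) := by
      rw [← hv2, real_inner_self_eq_norm_sq, Real.sqrt_sq (norm_nonneg v)]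
    have hxz : ⟪x, z⟫ = a * b + ⟪u, v⟫ := by
      have hx' : x = a • y + u := by rw [hu]; abel
      have hz' : z = b • y + v := by rw [hv]; abel
      calc ⟪x, z⟫ = ⟪a • y + u, b • y + v⟫ := by rw [← hx', ← hz']
        _ = a * b + ⟪u, v⟫ := by
            simp only [inner_add_left, inner_add_right, real_inner_smul_left,
              real_inner_smul_right, hyy, hyv, huy]
            ring
    have hiuv : -(‖u‖ * ‖v‖) ≤ ⟪u, v⟫ := neg_le_of_abs_le (abs_real_inner_le_norm u v)
    have key : Real.cos (Real.arccos a + Real.arccos b) ≤ ⟪x, z⟫ := by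
      rw [Real.cos_add, Real.cos_arccos ha1 ha2, Real.cos_arccos hb1 hb2,
        Real.sin_arccos, Real.sin_arccos, hxz]
      rw [hnu, hnv] at hiuv
      linarith
    calc Real.arccos ⟪x, z⟫ ≤ Real.arccos (Real.cos (Real.arccos a + Real.arccos b)) :=
          Stmt3Aux.arccos_antitone key
      _ = Real.arccos a + Real.arccos b := Real.arccos_cos
          (by have := Real.arccos_nonneg a; have := Real.arccos_nonneg b; linarith) hle
  · push_neg at hle
    have := Real.arccos_le_pi (⟪x, z⟫ : ℝ)
    linarith

end Aux

namespace Stmt3Aux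

local notation "⟪" x ", " y "⟫" => @inner ℝ _ _ x y

variable {n : ℕ}

lemma norm_of_mem {x : Euc n} (hx : x ∈ upperHemi n) : ‖x‖ = 1 := by
  have := hx.1
  rwa [unitSphere, mem_sphere_zero_iff_norm] at this

lemma equator_subset : equator n ⊆ upperHemi n := fun x hx => hx.1

lemma geod_comm (x y : Euc n) : geod x y = geod y x := by
  rw [geod, geod, real_inner_comm]

lemma geod_self {x : Euc n} (hx : ‖x‖ = 1) : geod x x = 0 := by
  rw [geod]
  have : ⟪x, x⟫ = 1 := by rw [real_inner_self_eq_norm_sq, hx]; norm_num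
  rw [this, Real.arccos_one]

lemma geod_nonneg (x y : Euc n) : 0 ≤ geod x y := Real.arccos_nonneg _

lemma geod_triangle {x y z : Euc n} (hx : ‖x‖ = 1) (hy : ‖y‖ = 1) (hz : ‖z‖ = 1) :
    geod x z ≤ geod x y + geod y z := arccos_triangle hx hy hz

lemma inner_of_geod_eq {x y x' y' : Euc n} (hx : ‖x‖ = 1) (hy : ‖y‖ = 1)
    (hx' : ‖x'‖ = 1) (hy' : ‖y'‖ = 1) (h : geod x y = geod x' y') :
    ⟪x, y⟫ = ⟪x', y'⟫ := by
  rw [← cos_arccos_inner hx hy, ← cos_arccos_inner hx' hy']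
  rw [geod, geod] at h
  rw [h]

lemma isCompact_upperHemi : IsCompact (upperHemi n) := by
  have h1 : IsCompact (unitSphere n) := isCompact_sphere 0 1
  have h2 : IsClosed {x : Euc n | 0 ≤ x (Fin.last n)} :=
    isClosed_le continuous_const (EuclideanSpace.proj (Fin.last n)).continuous
  exact h1.inter_right h2

/-- A surjective `1`-Lipschitz self-map of the compact hemisphere is a `geod`-isometry. -/
lemma isometry_of_surj (T : Euc n → Euc n)
    (hT_maps : ∀ x ∈ upperHemi n, T x ∈ upperHemi n)
    (hT_surj : ∀ y ∈ upperHemi n, ∃ x ∈ upperHemi n, T x = y)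
    (hT_lip : ∀ x ∈ upperHemi n, ∀ y ∈ upperHemi n, geod (T x) (T y) ≤ geod x y) :
    ∀ x ∈ upperHemi n, ∀ y ∈ upperHemi n, geod (T x) (T y) = geod x y := by
  -- iterates stay in `H` and do not expand
  have hmem : ∀ m : ℕ, ∀ p ∈ upperHemi n, T^[m] p ∈ upperHemi n := by
    intro m
    induction m with
    | zero => intro p hp; simpa using hp
    | succ m ih =>
      intro p hp
      rw [Function.iterate_succ_apply]
      exact ih _ (hT_maps p hp)
  have hlip0 : ∀ m : ℕ, ∀ p ∈ upperHemi n, ∀ q ∈ upperHemi n,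
      geod (T^[m] p) (T^[m] q) ≤ geod p q := by
    intro m
    induction m with
    | zero => intro p _ q _; simp
    | succ m ih =>
      intro p hp q hq
      rw [Function.iterate_succ_apply, Function.iterate_succ_apply]
      exact le_trans (ih _ (hT_maps p hp) _ (hT_maps q hq)) (hT_lip p hp q hq)
  have hlip1 : ∀ m : ℕ, ∀ p ∈ upperHemi n, ∀ q ∈ upperHemi n,
      geod (T^[m+1] p) (T^[m+1] q) ≤ geod (T p) (T q) := by
    intro m p hp q hq
    rw [Function.iterate_succ_apply, Function.iterate_succ_apply]
    exact hlip0 m _ (hT_maps p hp) _ (hT_maps q hq)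
  intro x hx y hy
  refine le_antisymm (hT_lip x hx y hy) ?_
  refine le_of_forall_pos_le_add ?_
  intro ε hε
  -- backward orbits
  choose S hS hTS using hT_surj
  let a : ℕ → {p : Euc n // p ∈ upperHemi n} := fun k =>
    Nat.rec ⟨x, hx⟩ (fun _ p => ⟨S p.1 p.2, hS p.1 p.2⟩) k
  let b : ℕ → {p : Euc n // p ∈ upperHemi n} := fun k =>
    Nat.rec ⟨y, hy⟩ (fun _ p => ⟨S p.1 p.2, hS p.1 p.2⟩) k
  have ha0 : (a 0).1 = x := rfl
  have hb0 : (b 0).1 = y := rfl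
  have haT : ∀ k, T (a (k+1)).1 = (a k).1 := fun k => hTS _ _
  have hbT : ∀ k, T (b (k+1)).1 = (b k).1 := fun k => hTS _ _
  have hiterA : ∀ m k : ℕ, T^[m] (a (k+m)).1 = (a k).1 := by
    intro m
    induction m with
    | zero => intro k; rfl
    | succ m ih =>
      intro k
      have h1 : T ((a (k + (m+1))).1) = (a (k+m)).1 := haT (k+m)
      rw [Function.iterate_succ_apply, h1, ih k]
  have hiterB : ∀ m k : ℕ, T^[m] (b (k+m)).1 = (b k).1 := by
    intro m
    induction m with
    | zero => intro k; rfl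
    | succ m ih =>
      intro k
      have h1 : T ((b (k + (m+1))).1) = (b (k+m)).1 := hbT (k+m)
      rw [Function.iterate_succ_apply, h1, ih k]
  -- extract a convergent subsequence of the pair orbit
  have hcomp : IsCompact ((upperHemi n) ×ˢ (upperHemi n)) :=
    isCompact_upperHemi.prod isCompact_upperHemi
  have hu : ∀ k, ((a k).1, (b k).1) ∈ (upperHemi n) ×ˢ (upperHemi n) :=
    fun k => ⟨(a k).2, (b k).2⟩
  obtain ⟨c, hcmem, φ, hφmono, hφlim⟩ := hcomp.tendsto_subseq hu
  have hc1 : ‖c.1‖ = 1 := norm_of_mem hcmem.1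
  have hc2 : ‖c.2‖ = 1 := norm_of_mem hcmem.2
  set F : Euc n × Euc n → ℝ := fun p => geod p.1 c.1 + geod p.2 c.2 with hF
  have hFcont : Continuous F := by
    unfold F
    unfold geod
    exact (Real.continuous_arccos.comp (continuous_fst.inner continuous_const)).add
      (Real.continuous_arccos.comp (continuous_snd.inner continuous_const))
  have hFc : F c = 0 := by
    simp only [hF, geod_self hc1, geod_self hc2, add_zero]
  have hFlim : Filter.Tendsto (fun k => F ((a (φ k)).1, (b (φ k)).1)) Filter.atTop (nhds 0) := by
    rw [← hFc]
    exact (hFcont.tendsto c).comp hφlim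
  have hε4 : 0 < ε/4 := by linarith
  obtain ⟨K, hK⟩ := (Filter.eventually_atTop).mp (hFlim.eventually (gt_mem_nhds hε4))
  set i := φ K with hi
  set j := φ (K+1) with hj
  have hij : i < j := hφmono (Nat.lt_succ_self K)
  have hFi : geod (a i).1 c.1 + geod (b i).1 c.2 < ε/4 := hK K le_rfl
  have hFj : geod (a j).1 c.1 + geod (b j).1 c.2 < ε/4 := hK (K+1) (Nat.le_succ K)
  have hgi1 := geod_nonneg (a i).1 c.1
  have hgi2 := geod_nonneg (b i).1 c.2
  have hgj1 := geod_nonneg (a j).1 c.1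
  have hgj2 := geod_nonneg (b j).1 c.2
  obtain ⟨m', hm'⟩ : ∃ m', j = (m' + 1) + i := ⟨j - i - 1, by omega⟩
  -- the pieces of the orbits at the matching times are close
  have haji : geod (a j).1 (a i).1 < ε/2 := by
    calc geod (a j).1 (a i).1
        ≤ geod (a j).1 c.1 + geod c.1 (a i).1 :=
          geod_triangle (norm_of_mem (a j).2) hc1 (norm_of_mem (a i).2)
      _ = geod (a j).1 c.1 + geod (a i).1 c.1 := by rw [geod_comm c.1]
      _ < ε/2 := by linarith
  have hbji : geod (b j).1 (b i).1 < ε/2 := by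
    calc geod (b j).1 (b i).1
        ≤ geod (b j).1 c.2 + geod c.2 (b i).1 :=
          geod_triangle (norm_of_mem (b j).2) hc2 (norm_of_mem (b i).2)
      _ = geod (b j).1 c.2 + geod (b i).1 c.2 := by rw [geod_comm c.2]
      _ < ε/2 := by linarith
  -- `a (m'+1)` is `ε/2`-close to `x` and is an `(m'+1)`-fold `T`-preimage of `x`
  have e1 : T^[i] (a j).1 = (a (m'+1)).1 := by rw [hm']; exact hiterA i (m'+1)
  have e1b : T^[i] (b j).1 = (b (m'+1)).1 := by rw [hm']; exact hiterB i (m'+1)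
  have e2 : T^[i] (a i).1 = x := by
    have h := hiterA i 0; rwa [Nat.zero_add, ha0] at h
  have e2b : T^[i] (b i).1 = y := by
    have h := hiterB i 0; rwa [Nat.zero_add, hb0] at h
  have hamx : geod (a (m'+1)).1 x < ε/2 := by
    have h := hlip0 i (a j).1 (a j).2 (a i).1 (a i).2
    rw [e1, e2] at h
    exact lt_of_le_of_lt h haji
  have hbmy : geod (b (m'+1)).1 y < ε/2 := by
    have h := hlip0 i (b j).1 (b j).2 (b i).1 (b i).2
    rw [e1b, e2b] at h
    exact lt_of_le_of_lt h hbji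
  -- main estimate
  have e3 : T^[m'+1] (a (m'+1)).1 = x := by
    have h := hiterA (m'+1) 0; rwa [Nat.zero_add, ha0] at h
  have e3b : T^[m'+1] (b (m'+1)).1 = y := by
    have h := hiterB (m'+1) 0; rwa [Nat.zero_add, hb0] at h
  have step1 : geod x y ≤ geod (T (a (m'+1)).1) (T (b (m'+1)).1) := by
    have h := hlip1 m' (a (m'+1)).1 (a (m'+1)).2 (b (m'+1)).1 (b (m'+1)).2
    rwa [e3, e3b] at h
  have hTam : T (a (m'+1)).1 ∈ upperHemi n := hT_maps _ (a (m'+1)).2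
  have hTbm : T (b (m'+1)).1 ∈ upperHemi n := hT_maps _ (b (m'+1)).2
  have hTx : T x ∈ upperHemi n := hT_maps x hx
  have hTy : T y ∈ upperHemi n := hT_maps y hy
  have step2 : geod (T (a (m'+1)).1) (T (b (m'+1)).1)
      ≤ geod (T (a (m'+1)).1) (T x) + geod (T x) (T y) + geod (T y) (T (b (m'+1)).1) := by
    calc geod (T (a (m'+1)).1) (T (b (m'+1)).1)
        ≤ geod (T (a (m'+1)).1) (T x) + geod (T x) (T (b (m'+1)).1) :=
          geod_triangle (norm_of_mem hTam) (norm_of_mem hTx) (norm_of_mem hTbm)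
      _ ≤ geod (T (a (m'+1)).1) (T x) + (geod (T x) (T y) + geod (T y) (T (b (m'+1)).1)) := by
          have := geod_triangle (norm_of_mem hTx) (norm_of_mem hTy) (norm_of_mem hTbm)
          linarith
      _ = _ := by ring
  have step3 : geod (T (a (m'+1)).1) (T x) ≤ geod (a (m'+1)).1 x :=
    hT_lip _ (a (m'+1)).2 x hx
  have step4 : geod (T y) (T (b (m'+1)).1) ≤ geod (b (m'+1)).1 y := by
    have h := hT_lip y hy _ (b (m'+1)).2
    calc geod (T y) (T (b (m'+1)).1) ≤ geod y (b (m'+1)).1 := h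
      _ = geod (b (m'+1)).1 y := geod_comm _ _
  calc geod x y ≤ geod (T (a (m'+1)).1) (T (b (m'+1)).1) := step1
    _ ≤ geod (T (a (m'+1)).1) (T x) + geod (T x) (T y) + geod (T y) (T (b (m'+1)).1) := step2
    _ ≤ geod (a (m'+1)).1 x + geod (T x) (T y) + geod (b (m'+1)).1 y := by linarith
    _ ≤ geod (T x) (T y) + ε := by linarith

/-! ### Coordinates, the equator and the last coordinate -/

lemma inner_eq_sum (x y : Euc n) : ⟪x, y⟫ = ∑ i, x i * y i := by
  rw [PiLp.inner_apply]
  simp [RCLike.inner_apply]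
  exact Finset.sum_congr rfl fun i _ => mul_comm _ _

lemma sum_mul_self {x : Euc n} (hx : x ∈ upperHemi n) : ∑ i, x i * x i = 1 := by
  rw [← inner_eq_sum, real_inner_self_eq_norm_sq, norm_of_mem hx]
  norm_num

lemma sum_split {x : Euc n} (hx : x ∈ upperHemi n) :
    ∑ j : Fin n, x j.castSucc * x j.castSucc
      = 1 - x (Fin.last n) * x (Fin.last n) := by
  have h := sum_mul_self hx
  rw [Fin.sum_univ_castSucc] at h
  linarith

lemma last_sq_le_one {x : Euc n} (hx : x ∈ upperHemi n) :
    x (Fin.last n) * x (Fin.last n) ≤ 1 := by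
  have h := sum_split hx
  have h2 : (0:ℝ) ≤ ∑ j : Fin n, x j.castSucc * x j.castSucc :=
    Finset.sum_nonneg fun j _ => mul_self_nonneg _
  linarith

lemma northPole_last : northPole n (Fin.last n) = 1 := by
  rw [northPole, EuclideanSpace.single_apply, if_pos rfl]

lemma northPole_castSucc (j : Fin n) : northPole n j.castSucc = 0 := by
  rw [northPole, EuclideanSpace.single_apply, if_neg (Fin.castSucc_lt_last j).ne]

lemma northPole_mem : northPole n ∈ upperHemi n := by
  constructor
  · rw [unitSphere, mem_sphere_zero_iff_norm, northPole, EuclideanSpace.norm_single]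
    norm_num
  · rw [northPole_last]; norm_num

lemma inner_northPole (x : Euc n) : ⟪x, northPole n⟫ = x (Fin.last n) := by
  rw [northPole]
  have := EuclideanSpace.inner_single_right (𝕜 := ℝ) (Fin.last n) 1 x
  simpa using this

lemma single_castSucc_mem_equator (j : Fin n) :
    EuclideanSpace.single j.castSucc (1:ℝ) ∈ equator n := by
  refine ⟨⟨?_, ?_⟩, ?_⟩
  · rw [unitSphere, mem_sphere_zero_iff_norm, EuclideanSpace.norm_single]; norm_num
  · rw [EuclideanSpace.single_apply, if_neg (Fin.castSucc_lt_last j).ne']; 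
  · rw [EuclideanSpace.single_apply, if_neg (Fin.castSucc_lt_last j).ne']

lemma B1 {x c : Euc n} (hx : x ∈ upperHemi n) (hc : c ∈ equator n) :
    ⟪x, c⟫ ≤ Real.sqrt (1 - x (Fin.last n) * x (Fin.last n)) := by
  have hc0 : c (Fin.last n) = 0 := hc.2
  have hsum : ⟪x, c⟫ = ∑ j : Fin n, x j.castSucc * c j.castSucc := by
    rw [inner_eq_sum, Fin.sum_univ_castSucc, hc0, mul_zero, add_zero]
  have hxs := sum_split hx
  have hcs : ∑ j : Fin n, c j.castSucc * c j.castSucc = 1 := by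
    have := sum_split (equator_subset hc)
    rw [hc0] at this
    linarith
  have hCS := Finset.sum_mul_sq_le_sq_mul_sq Finset.univ
    (fun j : Fin n => x j.castSucc) (fun j : Fin n => c j.castSucc)
  have hxs' : ∑ j : Fin n, (x j.castSucc)^2 = 1 - x (Fin.last n) * x (Fin.last n) := by
    rw [← hxs]; congr 1; ext j; ring
  have hcs' : ∑ j : Fin n, (c j.castSucc)^2 = 1 := by
    rw [← hcs]; congr 1; ext j; ring
  rw [hxs', hcs', mul_one] at hCS
  calc ⟪x, c⟫ = ∑ j : Fin n, x j.castSucc * c j.castSucc := hsum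
    _ ≤ |∑ j : Fin n, x j.castSucc * c j.castSucc| := le_abs_self _
    _ = Real.sqrt ((∑ j : Fin n, x j.castSucc * c j.castSucc)^2) :=
        (Real.sqrt_sq_eq_abs _).symm
    _ ≤ Real.sqrt (1 - x (Fin.last n) * x (Fin.last n)) := Real.sqrt_le_sqrt hCS

lemma B2 {x : Euc n} (hx : x ∈ upperHemi n) (hn' : 0 < n) :
    ∃ c ∈ equator n, ⟪x, c⟫ = Real.sqrt (1 - x (Fin.last n) * x (Fin.last n)) := by
  set h : ℝ := x (Fin.last n) with hh
  have hh2 : h * h ≤ 1 := last_sq_le_one hx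
  set s : ℝ := Real.sqrt (1 - h * h) with hsdef
  have hs0 : 0 ≤ s := Real.sqrt_nonneg _
  have hss : s * s = 1 - h * h := Real.mul_self_sqrt (by linarith)
  by_cases hz : s = 0
  · have h10 : 1 - h * h = 0 := by rw [← hss, hz]; ring
    have hall : ∀ j : Fin n, x j.castSucc = 0 := by
      have hsp := sum_split hx
      have h10' : (1:ℝ) - x (Fin.last n) * x (Fin.last n) = 0 := h10
      have hsp0 : ∑ j : Fin n, x j.castSucc * x j.castSucc = 0 := by linarith
      intro j
      have := (Finset.sum_eq_zero_iff_of_nonneg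
        (fun j (_ : j ∈ Finset.univ) => mul_self_nonneg (x (Fin.castSucc j)))).mp
        hsp0 j (Finset.mem_univ j)
      exact mul_self_eq_zero.mp this
    refine ⟨EuclideanSpace.single (Fin.castSucc ⟨0, hn'⟩) (1:ℝ),
      single_castSucc_mem_equator _, ?_⟩
    have hi := EuclideanSpace.inner_single_right (𝕜 := ℝ) (Fin.castSucc (⟨0, hn'⟩ : Fin n)) 1 x
    rw [hi, hall ⟨0, hn'⟩]
    rw [hz]
    simp
  · have hs : 0 < s := lt_of_le_of_ne hs0 (Ne.symm hz)
    have hxx : ⟪x, x⟫ = 1 := by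
      rw [real_inner_self_eq_norm_sq, norm_of_mem hx]; norm_num
    have hxN : ⟪x, northPole n⟫ = h := inner_northPole x
    have hNN : ⟪northPole n, northPole n⟫ = 1 := by
      rw [real_inner_self_eq_norm_sq, norm_of_mem northPole_mem]; norm_num
    set c : Euc n := s⁻¹ • (x - h • northPole n) with hcdef
    have hclast : c (Fin.last n) = 0 := by
      rw [hcdef]
      rw [PiLp.smul_apply, PiLp.sub_apply, PiLp.smul_apply, northPole_last]
      simp
      exact Or.inr (sub_eq_zero.mpr hh.symm)
    have hcx : ⟪x, c⟫ = s := by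
      rw [hcdef, real_inner_smul_right, inner_sub_right, real_inner_smul_right, hxx, hxN]
      field_simp
      linarith [hss]
    have hcc : ⟪c, c⟫ = 1 := by
      rw [hcdef, real_inner_smul_right, real_inner_smul_left]
      rw [inner_sub_left, inner_sub_right, inner_sub_right, real_inner_smul_left,
        real_inner_smul_left, real_inner_smul_right, real_inner_smul_right,
        hxx, hxN, hNN]
      have hNx : ⟪northPole n, x⟫ = h := by rw [real_inner_comm]; exact hxN
      rw [hNx]
      have : s⁻¹ * s⁻¹ * (s * s) = 1 := by field_simp
      calc s⁻¹ * (s⁻¹ * (1 - h * h - (h * h - h * (h * 1))))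
          = s⁻¹ * s⁻¹ * (1 - h * h) := by ring
        _ = s⁻¹ * s⁻¹ * (s * s) := by rw [hss]
        _ = 1 := this
    have hcnorm : ‖c‖ = 1 := by
      have h2 : ‖c‖^2 = 1 := by rw [← real_inner_self_eq_norm_sq, hcc]
      rw [← Real.sqrt_sq (norm_nonneg c), h2, Real.sqrt_one]
    exact ⟨c, ⟨⟨(mem_sphere_zero_iff_norm).mpr hcnorm, by rw [hclast]⟩, hclast⟩, hcx⟩

lemma inner_northPole_self : ⟪northPole n, northPole n⟫ = 1 := by
  rw [real_inner_self_eq_norm_sq, norm_of_mem northPole_mem]; norm_num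

/-- An isometry of the hemisphere preserving the equator preserves the last coordinate. -/
lemma last_pres (hn' : 0 < n) (T : Euc n → Euc n)
    (hT_maps : ∀ x ∈ upperHemi n, T x ∈ upperHemi n)
    (hT_eq : T '' equator n = equator n)
    (hinner : ∀ x ∈ upperHemi n, ∀ y ∈ upperHemi n, ⟪T x, T y⟫ = ⟪x, y⟫) :
    ∀ x ∈ upperHemi n, T x (Fin.last n) = x (Fin.last n) := by
  intro x hx
  have hTx : T x ∈ upperHemi n := hT_maps x hx
  have hTC : ∀ c ∈ equator n, T c ∈ equator n :=
    fun c hc => hT_eq ▸ Set.mem_image_of_mem T hc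
  obtain ⟨c, hcC, hcinner⟩ := B2 hx hn'
  have le1 : Real.sqrt (1 - x (Fin.last n) * x (Fin.last n))
      ≤ Real.sqrt (1 - T x (Fin.last n) * T x (Fin.last n)) := by
    calc Real.sqrt (1 - x (Fin.last n) * x (Fin.last n)) = ⟪x, c⟫ := hcinner.symm
      _ = ⟪T x, T c⟫ := (hinner x hx c (equator_subset hcC)).symm
      _ ≤ _ := B1 hTx (hTC c hcC)
  obtain ⟨c', hc'C, hc'inner⟩ := B2 hTx hn'
  have : c' ∈ T '' equator n := by rw [hT_eq]; exact hc'C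
  obtain ⟨y, hyC, rfl⟩ := this
  have le2 : Real.sqrt (1 - T x (Fin.last n) * T x (Fin.last n))
      ≤ Real.sqrt (1 - x (Fin.last n) * x (Fin.last n)) := by
    calc Real.sqrt (1 - T x (Fin.last n) * T x (Fin.last n)) = ⟪T x, T y⟫ := hc'inner.symm
      _ = ⟪x, y⟫ := hinner x hx y (equator_subset hyC)
      _ ≤ _ := B1 hx hyC
  have heq := le_antisymm le1 le2
  have h2 : 1 - x (Fin.last n) * x (Fin.last n)
      = 1 - T x (Fin.last n) * T x (Fin.last n) := by
    have hb1 := last_sq_le_one hx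
    have hb2 := last_sq_le_one hTx
    exact (Real.sqrt_inj (by linarith) (by linarith)).mp heq
  have hp1 := hx.2
  have hp2 := hTx.2
  nlinarith

lemma fix_northPole (T : Euc n → Euc n)
    (hT_maps : ∀ x ∈ upperHemi n, T x ∈ upperHemi n)
    (hlast : ∀ x ∈ upperHemi n, T x (Fin.last n) = x (Fin.last n)) :
    T (northPole n) = northPole n := by
  have hNH : northPole n ∈ upperHemi n := northPole_mem
  have hTNH : T (northPole n) ∈ upperHemi n := hT_maps _ hNH
  have hl : T (northPole n) (Fin.last n) = 1 := by
    rw [hlast _ hNH, northPole_last]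
  have hsp := sum_split hTNH
  rw [hl] at hsp
  norm_num at hsp
  have hzero : ∀ j : Fin n, T (northPole n) j.castSucc = 0 := by
    intro j
    have := (Finset.sum_eq_zero_iff_of_nonneg
      (fun j (_ : j ∈ Finset.univ) => mul_self_nonneg (T (northPole n) (Fin.castSucc j)))).mp
      hsp j (Finset.mem_univ j)
    exact mul_self_eq_zero.mp this
  ext i
  rcases Fin.eq_castSucc_or_eq_last i with ⟨j, rfl⟩ | rfl
  · rw [hzero j, northPole_castSucc]
  · rw [hl, northPole_last]

end Stmt3Aux

/-- A surjective `1`-Lipschitz map `T : S^n_+ → S^n_+` with `T(C) = C` fixes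
the north pole and is induced by an orthogonal matrix acting on the first `n` coordinates;
in particular it is an isometry of `S^n_+`. -/
theorem stmt3 (n : ℕ) (hn : 2 ≤ n) (T : Euc n → Euc n)
    (hT_maps : ∀ x ∈ upperHemi n, T x ∈ upperHemi n)
    (hT_surj : ∀ y ∈ upperHemi n, ∃ x ∈ upperHemi n, T x = y)
    (hT_lip : ∀ x ∈ upperHemi n, ∀ y ∈ upperHemi n, geod (T x) (T y) ≤ geod x y)
    (hT_eq : T '' equator n = equator n) :
    T (northPole n) = northPole n ∧
    (∃ A : Matrix (Fin n) (Fin n) ℝ, A.transpose * A = 1 ∧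
      ∀ x ∈ upperHemi n,
        (∀ i : Fin n, T x i.castSucc = ∑ j : Fin n, A i j * x j.castSucc) ∧
        T x (Fin.last n) = x (Fin.last n)) ∧
    (∀ x ∈ upperHemi n, ∀ y ∈ upperHemi n, geod (T x) (T y) = geod x y) := by
  have hn' : 0 < n := by omega
  have hisom := Stmt3Aux.isometry_of_surj T hT_maps hT_surj hT_lip
  have hinner : ∀ x ∈ upperHemi n, ∀ y ∈ upperHemi n,
      (inner ℝ (T x) (T y) : ℝ) = inner ℝ x y := fun x hx y hy =>
    Stmt3Aux.inner_of_geod_eq (Stmt3Aux.norm_of_mem (hT_maps x hx))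
      (Stmt3Aux.norm_of_mem (hT_maps y hy)) (Stmt3Aux.norm_of_mem hx)
      (Stmt3Aux.norm_of_mem hy) (hisom x hx y hy)
  have hlast := Stmt3Aux.last_pres hn' T hT_maps hT_eq hinner
  have hTN := Stmt3Aux.fix_northPole T hT_maps hlast
  refine ⟨hTN, ?_, hisom⟩
  -- construction of the orthogonal matrix
  set e : Fin n → Euc n := fun j => EuclideanSpace.single j.castSucc (1:ℝ) with he
  have heC : ∀ j, e j ∈ equator n := fun j => Stmt3Aux.single_castSucc_mem_equator j
  have heH : ∀ j, e j ∈ upperHemi n := fun j => Stmt3Aux.equator_subset (heC j)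
  have hTC : ∀ c ∈ equator n, T c ∈ equator n :=
    fun c hc => hT_eq ▸ Set.mem_image_of_mem T hc
  set u : Fin n → Euc n := fun j => T (e j) with hu
  have huC : ∀ j, u j ∈ equator n := fun j => hTC _ (heC j)
  have huH : ∀ j, u j ∈ upperHemi n := fun j => Stmt3Aux.equator_subset (huC j)
  have hcoord : ∀ (v : Euc n) (i : Fin n), (inner ℝ v (e i) : ℝ) = v i.castSucc := by
    intro v i
    simp only [he]
    rw [EuclideanSpace.inner_single_right]
    simp
  have hee : ∀ i j, (inner ℝ (e i) (e j) : ℝ) = if i = j then 1 else 0 := by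
    intro i j
    rw [hcoord (e i) j]
    simp only [he, EuclideanSpace.single_apply, Fin.castSucc_inj]
    by_cases h : i = j
    · subst h; simp
    · rw [if_neg (Ne.symm h), if_neg h]
  have huu : ∀ i j, (inner ℝ (u i) (u j) : ℝ) = if i = j then 1 else 0 := fun i j => by
    rw [hu]
    simp only
    rw [hinner _ (heH i) _ (heH j)]
    exact hee i j
  have huN : ∀ j, (inner ℝ (u j) (northPole n) : ℝ) = 0 := fun j => by
    rw [Stmt3Aux.inner_northPole]; exact (huC j).2
  have hTxu : ∀ x ∈ upperHemi n, ∀ j, (inner ℝ (T x) (u j) : ℝ) = x j.castSucc := by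
    intro x hx j
    rw [hu]
    simp only
    rw [hinner x hx _ (heH j), hcoord x j]
  have hTxN : ∀ x ∈ upperHemi n, (inner ℝ (T x) (northPole n) : ℝ) = x (Fin.last n) := by
    intro x hx
    rw [Stmt3Aux.inner_northPole]; exact hlast x hx
  refine ⟨Matrix.of fun i j => u j i.castSucc, ?_, ?_⟩
  · -- orthogonality
    ext j k
    rw [Matrix.mul_apply, Matrix.one_apply]
    simp only [Matrix.transpose_apply, Matrix.of_apply]
    have h := huu j k
    rw [Stmt3Aux.inner_eq_sum, Fin.sum_univ_castSucc, (huC j).2, (huC k).2] at h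
    simpa using h
  · intro x hx
    -- the key expansion `T x = (x last) • N + ∑ x_j • u j`
    set w : Euc n := x (Fin.last n) • northPole n
        + ∑ j : Fin n, x j.castSucc • u j with hw
    have hvw : ∀ v : Euc n, (inner ℝ v w : ℝ)
        = x (Fin.last n) * inner ℝ v (northPole n)
          + ∑ j : Fin n, x j.castSucc * inner ℝ v (u j) := by
      intro v
      rw [hw, inner_add_right, real_inner_smul_right, inner_sum]
      congr 1
      exact Finset.sum_congr rfl fun j _ => real_inner_smul_right v (u j) _
    have hQ := Stmt3Aux.sum_split hx
    have hTxw : (inner ℝ (T x) w : ℝ) = 1 := by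
      rw [hvw, hTxN x hx]
      have : ∑ j : Fin n, x j.castSucc * (inner ℝ (T x) (u j) : ℝ)
          = ∑ j : Fin n, x j.castSucc * x j.castSucc :=
        Finset.sum_congr rfl fun j _ => by rw [hTxu x hx j]
      rw [this]
      linarith
    have hwN : (inner ℝ w (northPole n) : ℝ) = x (Fin.last n) := by
      rw [real_inner_comm, hvw, Stmt3Aux.inner_northPole_self]
      have : ∑ j : Fin n, x j.castSucc * (inner ℝ (northPole n) (u j) : ℝ) = 0 := by
        apply Finset.sum_eq_zero
        intro j _
        rw [real_inner_comm, huN j, mul_zero]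
      rw [this]
      ring
    have hwu : ∀ k, (inner ℝ w (u k) : ℝ) = x k.castSucc := by
      intro k
      rw [real_inner_comm, hvw, huN k]
      have : ∑ j : Fin n, x j.castSucc * (inner ℝ (u k) (u j) : ℝ)
          = ∑ j : Fin n, if k = j then x j.castSucc else 0 := by
        refine Finset.sum_congr rfl fun j _ => ?_
        rw [huu k j]
        by_cases h : k = j <;> simp [h]
      rw [this, Finset.sum_ite_eq]
      simp
    have hww : (inner ℝ w w : ℝ) = 1 := by
      rw [hvw, hwN]
      have : ∑ j : Fin n, x j.castSucc * (inner ℝ w (u j) : ℝ)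
          = ∑ j : Fin n, x j.castSucc * x j.castSucc :=
        Finset.sum_congr rfl fun j _ => by rw [hwu j]
      rw [this]
      linarith
    have hTT : (inner ℝ (T x) (T x) : ℝ) = 1 := by
      rw [real_inner_self_eq_norm_sq, Stmt3Aux.norm_of_mem (hT_maps x hx)]; norm_num
    have hzero : (inner ℝ (T x - w) (T x - w) : ℝ) = 0 := by
      rw [inner_sub_left, inner_sub_right, inner_sub_right]
      have hcw : (inner ℝ w (T x) : ℝ) = 1 := by rw [real_inner_comm]; exact hTxw
      rw [hTT, hTxw, hcw, hww]
      ring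
    have hTxeq : T x = w := sub_eq_zero.mp (inner_self_eq_zero.mp hzero)
    constructor
    · intro i
      have h1 : T x i.castSucc = (inner ℝ (T x) (e i) : ℝ) := (hcoord (T x) i).symm
      rw [h1, hTxeq, real_inner_comm, hvw (e i)]
      have h2 : (inner ℝ (e i) (northPole n) : ℝ) = 0 :=
        (Stmt3Aux.inner_northPole (e i)).trans (heC i).2
      rw [h2, mul_zero, zero_add]
      refine Finset.sum_congr rfl fun j _ => ?_
      rw [real_inner_comm, hcoord (u j) i, Matrix.of_apply, mul_comm]
    · exact hlast x hx

end
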